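/- For any planar lattice Γ ⊆ ℝ² and any coincidence isometry R, the coincidence index equals the denominator: Σ_Γ(R) = den_Γ(R). -/

import Mathlib

noncomputable section

abbrev Euc (d : ℕ) : Type := EuclideanSpace ℝ (Fin d)

/-- Γ is a (full-rank) lattice in ℝ^d: the ℤ-span of an ℝ-basis of ℝ^d. -/
def IsLattice {d : ℕ} (Γ : AddSubgroup (Euc d)) : Prop :=
  ∃ b : Module.Basis (Fin d) ℝ (Euc d),
    Γ = (Submodule.span ℤ (Set.range ⇑b)).toAddSubgroup

/-- Two subgroups are commensurate if their intersection has finite index in both. -/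
def Commensurate {d : ℕ} (Γ₁ Γ₂ : AddSubgroup (Euc d)) : Prop :=
  ((Γ₁ ⊓ Γ₂).addSubgroupOf Γ₁).FiniteIndex ∧ ((Γ₁ ⊓ Γ₂).addSubgroupOf Γ₂).FiniteIndex

/-- The image α·R(Γ) of Γ under the similarity transformation αR. -/
def simMap {d : ℕ} (α : ℝ) (R : Euc d ≃ₗᵢ[ℝ] Euc d) (Γ : AddSubgroup (Euc d)) :
    AddSubgroup (Euc d) :=
  Γ.map (α • R.toLinearEquiv.toLinearMap).toAddMonoidHom

/-- The image R(Γ). -/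
def rotMap {d : ℕ} (R : Euc d ≃ₗᵢ[ℝ] Euc d) (Γ : AddSubgroup (Euc d)) :
    AddSubgroup (Euc d) :=
  Γ.map R.toLinearEquiv.toLinearMap.toAddMonoidHom

/-- The set of similarity isometries of Γ. -/
def OSset {d : ℕ} (Γ : AddSubgroup (Euc d)) : Set (Euc d ≃ₗᵢ[ℝ] Euc d) :=
  {R | ∃ α : ℝ, 0 < α ∧ simMap α R Γ ≤ Γ}

/-- The set of scaling factors of R, Scal_Γ(R) = {α : αRΓ ⊆ Γ}. -/
def Scal {d : ℕ} (Γ : AddSubgroup (Euc d)) (R : Euc d ≃ₗᵢ[ℝ] Euc d) : Set ℝ :=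
  {α | simMap α R Γ ≤ Γ}

/-- δ is the denominator of R: the smallest positive element of Scal Γ R. -/
def IsDen {d : ℕ} (Γ : AddSubgroup (Euc d)) (R : Euc d ≃ₗᵢ[ℝ] Euc d) (δ : ℝ) : Prop :=
  0 < δ ∧ δ ∈ Scal Γ R ∧ ∀ β : ℝ, 0 < β → β ∈ Scal Γ R → δ ≤ β

/-- The set of coincidence isometries of Γ. -/
def OCset {d : ℕ} (Γ : AddSubgroup (Euc d)) : Set (Euc d ≃ₗᵢ[ℝ] Euc d) :=
  {R | Commensurate Γ (rotMap R Γ)}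

/-- The coincidence index Σ_Γ(R) = [Γ : Γ ∩ RΓ]. -/
def coinIndex {d : ℕ} (Γ : AddSubgroup (Euc d)) (R : Euc d ≃ₗᵢ[ℝ] Euc d) : ℕ :=
  (rotMap R Γ).relIndex Γ

/-- The coincidence site lattice Γ(R) = Γ ∩ RΓ. -/
def CSL {d : ℕ} (Γ : AddSubgroup (Euc d)) (R : Euc d ≃ₗᵢ[ℝ] Euc d) :
    AddSubgroup (Euc d) :=
  Γ ⊓ rotMap R Γ

/-- The dual lattice Γ* = {x : ⟨x,y⟩ ∈ ℤ for all y ∈ Γ}. -/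
def dualLattice {d : ℕ} (Γ : AddSubgroup (Euc d)) : AddSubgroup (Euc d) where
  carrier := {x | ∀ y ∈ Γ, ∃ n : ℤ, (inner ℝ x y : ℝ) = (n : ℝ)}
  zero_mem' := by
    intro y hy
    exact ⟨0, by simp⟩
  add_mem' := by
    intro a b ha hb y hy
    obtain ⟨n, hn⟩ := ha y hy
    obtain ⟨m, hm⟩ := hb y hy
    exact ⟨n + m, by rw [inner_add_left, hn, hm]; push_cast; ring⟩
  neg_mem' := by
    intro a ha y hy
    obtain ⟨n, hn⟩ := ha y hy
    exact ⟨-n, by rw [inner_neg_left, hn]; push_cast; ring⟩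

namespace CoinAux

variable {d : ℕ} {Γ : AddSubgroup (Euc d)} {R : Euc d ≃ₗᵢ[ℝ] Euc d}

lemma mem_scal_iff {α : ℝ} : α ∈ Scal Γ R ↔ ∀ γ ∈ Γ, α • R γ ∈ Γ := by
  rw [Scal, Set.mem_setOf_eq, simMap, AddSubgroup.map_le_iff_le_comap]
  constructor
  · intro h γ hγ
    have := h hγ
    simpa using this
  · intro h γ hγ
    simpa using h γ hγ

lemma mem_rotMap_iff {x : Euc d} : x ∈ rotMap R Γ ↔ ∃ γ ∈ Γ, R γ = x := by
  rw [rotMap]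
  simp [AddSubgroup.mem_map]

lemma scal_sub {α β : ℝ} (hα : α ∈ Scal Γ R) (hβ : β ∈ Scal Γ R) : α - β ∈ Scal Γ R := by
  rw [mem_scal_iff] at *
  intro γ hγ
  rw [sub_smul]
  exact Γ.sub_mem (hα γ hγ) (hβ γ hγ)

lemma scal_int_mul {α : ℝ} (k : ℤ) (hα : α ∈ Scal Γ R) : (k : ℝ) * α ∈ Scal Γ R := by
  rw [mem_scal_iff] at *
  intro γ hγ
  rw [mul_smul, Int.cast_smul_eq_zsmul]
  exact zsmul_mem (hα γ hγ) k

lemma isden_int_mult {δ : ℝ} (hδ : IsDen Γ R δ) {α : ℝ} (hα : α ∈ Scal Γ R) :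
    ∃ k : ℤ, α = k * δ := by
  obtain ⟨hδ0, hδS, hmin⟩ := hδ
  refine ⟨⌊α / δ⌋, ?_⟩
  by_contra hne
  set r : ℝ := α - ⌊α / δ⌋ * δ with hr
  have hrS : r ∈ Scal Γ R := scal_sub hα (scal_int_mul _ hδS)
  have hr0 : 0 ≤ r := by
    have h1 := Int.floor_le (α / δ)
    have h2 : (⌊α / δ⌋ : ℝ) * δ ≤ (α / δ) * δ := mul_le_mul_of_nonneg_right h1 hδ0.le
    rw [div_mul_cancel₀ _ hδ0.ne'] at h2
    simp [hr]; linarith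
  have hrlt : r < δ := by
    have h1 := Int.lt_floor_add_one (α / δ)
    have h2 : (α / δ) * δ < ((⌊α / δ⌋ : ℝ) + 1) * δ := mul_lt_mul_of_pos_right h1 hδ0
    rw [div_mul_cancel₀ _ hδ0.ne'] at h2
    simp [hr]; linarith
  have hrpos : 0 < r := by
    rcases lt_or_eq_of_le hr0 with h | h
    · exact h
    · exfalso; apply hne; rw [hr] at h; linarith
  exact absurd (hmin r hrpos hrS) (not_le.mpr hrlt)


open Submodule Set Matrix

variable {R : Euc 2 ≃ₗᵢ[ℝ] Euc 2}

lemma det_R (R : Euc 2 ≃ₗᵢ[ℝ] Euc 2) :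
    LinearMap.det R.toLinearEquiv.toLinearMap = 1 ∨
      LinearMap.det R.toLinearEquiv.toLinearMap = -1 := by
  classical
  set o := stdOrthonormalBasis ℝ (Euc 2) with ho
  set B := LinearMap.toMatrix o.toBasis o.toBasis R.toLinearEquiv.toLinearMap with hB
  have hBo : ∀ i j, B i j = inner ℝ (o i) (R (o j)) := by
    intro i j
    rw [hB, LinearMap.toMatrix_apply, OrthonormalBasis.coe_toBasis_repr_apply,
      OrthonormalBasis.repr_apply_apply, OrthonormalBasis.coe_toBasis]
    rfl
  have h1 : Bᵀ * B = 1 := by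
    ext i j
    rw [Matrix.mul_apply, Matrix.one_apply]
    have : ∀ k, Bᵀ i k * B k j = inner ℝ (R (o i)) (o k) * inner ℝ (o k) (R (o j)) := by
      intro k
      rw [Matrix.transpose_apply, hBo, hBo, real_inner_comm]
    rw [Finset.sum_congr rfl fun k _ => this k, OrthonormalBasis.sum_inner_mul_inner,
      LinearIsometryEquiv.inner_map_map]
    exact orthonormal_iff_ite.mp o.orthonormal i j
  have hdet : B.det * B.det = 1 := by
    have := congrArg Matrix.det h1
    rwa [Matrix.det_mul, Matrix.det_transpose, Matrix.det_one] at this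
  have := mul_self_eq_one_iff.mp hdet
  rwa [LinearMap.det_toMatrix] at this

variable (b : Module.Basis (Fin 2) ℝ (Euc 2))

lemma mem_lat_iff (x : Euc 2) :
    x ∈ (Submodule.span ℤ (Set.range ⇑b)).toAddSubgroup ↔
      ∀ i, ∃ n : ℤ, b.repr x i = n := by
  rw [Submodule.mem_toAddSubgroup, Module.Basis.mem_span_iff_repr_mem]
  constructor
  · intro h i; obtain ⟨n, hn⟩ := h i; exact ⟨n, hn.symm⟩
  · intro h i; obtain ⟨n, hn⟩ := h i; exact ⟨n, hn.symm⟩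

lemma scal_iff_mat (R : Euc 2 ≃ₗᵢ[ℝ] Euc 2) (α : ℝ) :
    α ∈ Scal (Submodule.span ℤ (Set.range ⇑b)).toAddSubgroup R ↔
      ∀ i j, ∃ n : ℤ, α * (LinearMap.toMatrix b b R.toLinearEquiv.toLinearMap) i j = n := by
  rw [mem_scal_iff]
  constructor
  · intro h i j
    have hb : b j ∈ (Submodule.span ℤ (Set.range ⇑b)).toAddSubgroup :=
      Submodule.subset_span (Set.mem_range_self j)
    have := (mem_lat_iff b _).mp (h (b j) hb) i
    obtain ⟨n, hn⟩ := this
    refine ⟨n, ?_⟩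
    rw [LinearMap.toMatrix_apply]
    rw [_root_.map_smul] at hn
    simpa using hn
  · intro h γ hγ
    rw [Submodule.mem_toAddSubgroup] at hγ ⊢
    induction hγ using Submodule.span_induction with
    | mem x hx =>
      obtain ⟨j, rfl⟩ := hx
      rw [← Submodule.mem_toAddSubgroup, mem_lat_iff]
      intro i
      obtain ⟨n, hn⟩ := h i j
      refine ⟨n, ?_⟩
      rw [_root_.map_smul]
      rw [LinearMap.toMatrix_apply] at hn
      simpa using hn
    | zero => simp
    | add x y hx hy ihx ihy =>
      rw [map_add, smul_add]; exact Submodule.add_mem _ ihx ihy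
    | smul c x hx ih =>
      have : R (c • x) = c • R x := by
        rw [← Int.cast_smul_eq_zsmul ℝ, _root_.map_smul, Int.cast_smul_eq_zsmul]
      rw [this, smul_comm]
      exact Submodule.smul_mem _ c ih

lemma scal_symm (R : Euc 2 ≃ₗᵢ[ℝ] Euc 2) (α : ℝ)
    (h : α ∈ Scal (Submodule.span ℤ (Set.range ⇑b)).toAddSubgroup R) :
    α ∈ Scal (Submodule.span ℤ (Set.range ⇑b)).toAddSubgroup R.symm := by
  classical
  rw [scal_iff_mat] at h ⊢
  set A := LinearMap.toMatrix b b R.toLinearEquiv.toLinearMap with hA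
  set A' := LinearMap.toMatrix b b R.symm.toLinearEquiv.toLinearMap with hA'
  have hcomp : A' * A = 1 := by
    rw [hA, hA', ← LinearMap.toMatrix_comp b b b, ← LinearMap.toMatrix_id b]
    congr 1
    ext x
    simp
  have hdet := det_R R
  rw [← LinearMap.det_toMatrix b, ← hA] at hdet
  have hadj : A * A.adjugate = A.det • 1 := Matrix.mul_adjugate A
  have hA'eq : A' = A.det • A.adjugate := by
    have h1 : A' * (A * A.adjugate) = A.det • A' := by
      rw [hadj, Matrix.mul_smul, Matrix.mul_one]
    have h2 : A' * (A * A.adjugate) = A.adjugate := by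
      rw [← Matrix.mul_assoc, hcomp, Matrix.one_mul]
    have h3 : A.adjugate = A.det • A' := by rw [← h2, h1]
    have hdd : A.det * A.det = 1 := by rcases hdet with h | h <;> rw [h] <;> norm_num
    calc A' = (A.det * A.det) • A' := by rw [hdd, one_smul]
    _ = A.det • (A.det • A') := by rw [mul_smul]
    _ = A.det • A.adjugate := by rw [← h3]
  have hadj2 := Matrix.adjugate_fin_two A
  have hadje : ∀ k l : Fin 2, ∃ n : ℤ, α * A.adjugate k l = n := by
    have hsimp : ∀ (x : ℝ) (n : ℤ), α * x = n → α * (-x) = (-n : ℤ) := by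
      intro x n hx; push_cast; linarith
    intro k l
    fin_cases k <;> fin_cases l
    · obtain ⟨n, hn⟩ := h 1 1
      exact ⟨n, by rw [hadj2]; simpa using hn⟩
    · obtain ⟨n, hn⟩ := h 0 1
      refine ⟨-n, ?_⟩
      rw [hadj2]
      simp only [Matrix.cons_val', Matrix.cons_val_zero, Matrix.cons_val_one, Matrix.head_cons,
        Matrix.head_fin_const, Matrix.empty_val', Matrix.cons_val_fin_one]
      exact hsimp _ n hn
    · obtain ⟨n, hn⟩ := h 1 0
      refine ⟨-n, ?_⟩
      rw [hadj2]
      simp only [Matrix.cons_val', Matrix.cons_val_zero, Matrix.cons_val_one, Matrix.head_cons,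
        Matrix.head_fin_const, Matrix.empty_val', Matrix.cons_val_fin_one]
      exact hsimp _ n hn
    · obtain ⟨n, hn⟩ := h 0 0
      exact ⟨n, by rw [hadj2]; simpa using hn⟩
  intro i j
  obtain ⟨n, hn⟩ := hadje i j
  rw [hA'eq]
  rcases hdet with hD | hD
  · exact ⟨n, by rw [Matrix.smul_apply, hD, one_smul]; exact hn⟩
  · refine ⟨-n, ?_⟩
    rw [Matrix.smul_apply, hD]
    push_cast
    rw [neg_smul, one_smul, mul_neg, hn]

lemma relindex_map_equiv (e : Euc 2 ≃+ Euc 2) (H K : AddSubgroup (Euc 2)) :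
    (H.map e.toAddMonoidHom).relIndex (K.map e.toAddMonoidHom) = H.relIndex K := by
  have h := AddSubgroup.relIndex_comap (H := H.map e.toAddMonoidHom) e.toAddMonoidHom K
  rw [← h, AddSubgroup.comap_map_eq_self_of_injective e.injective]

lemma relindex_nsmul_mem (H K : AddSubgroup (Euc 2)) (x : Euc 2) (hx : x ∈ K) :
    (H.relIndex K) • x ∈ H := by
  have h := AddSubgroup.nsmul_index_mem (H.addSubgroupOf K) (⟨x, hx⟩ : K)
  rw [AddSubgroup.mem_addSubgroupOf] at h
  have : ((((H.addSubgroupOf K).index • (⟨x, hx⟩ : K)) : K) : Euc 2) =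
      (H.addSubgroupOf K).index • x := by push_cast; rfl
  rw [this] at h
  exact h

lemma relindex_smul_lat (m : ℕ) (hm : 0 < m) :
    (((Submodule.span ℤ (Set.range ⇑b)).toAddSubgroup.map
        (DistribMulAction.toAddMonoidHom (Euc 2) ((m : ℕ) : ℝ))).relIndex
      (Submodule.span ℤ (Set.range ⇑b)).toAddSubgroup) = m ^ 2 := by
  classical
  haveI : NeZero m := ⟨hm.ne'⟩
  set N := Submodule.span ℤ (Set.range ⇑b) with hN
  set β := b.restrictScalars ℤ with hβ
  set toN : ↥(N.toAddSubgroup) → ↥N :=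
    fun x => ⟨x.1, (Submodule.mem_toAddSubgroup _).mp x.2⟩ with htoN
  have toN_add : ∀ x y, toN (x + y) = toN x + toN y := fun x y => rfl
  set f : ↥(N.toAddSubgroup) →+ (Fin 2 → ZMod m) :=
    AddMonoidHom.mk' (fun x i => ((β.repr (toN x) i : ℤ) : ZMod m))
      (by
        intro x y
        funext i
        show ((β.repr (toN (x + y)) i : ℤ) : ZMod m) = _
        rw [toN_add, map_add]
        simp) with hf
  have hsurj : Function.Surjective f := by
    intro v
    obtain ⟨w, hw⟩ : ∃ w : Fin 2 → ℤ, ∀ i, ((w i : ℤ) : ZMod m) = v i :=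
      ⟨fun i => (v i).cast, fun i => ZMod.intCast_rightInverse (v i)⟩
    set z : ↥N := ∑ i, w i • β i with hz
    refine ⟨⟨z.1, (Submodule.mem_toAddSubgroup _).mpr z.2⟩, ?_⟩
    funext i
    show ((β.repr z i : ℤ) : ZMod m) = v i
    rw [hz, Module.Basis.repr_sum_self]
    exact hw i
  have hker : ((N.toAddSubgroup.map
      (DistribMulAction.toAddMonoidHom (Euc 2) ((m : ℕ) : ℝ))).addSubgroupOf
        N.toAddSubgroup) = f.ker := by
    ext x
    rw [AddSubgroup.mem_addSubgroupOf, AddMonoidHom.mem_ker]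
    constructor
    · intro hx
      obtain ⟨y, hy, hxy⟩ := AddSubgroup.mem_map.mp hx
      funext i
      set z : ↥N := ⟨y, (Submodule.mem_toAddSubgroup _).mp hy⟩ with hzdef
      have hxz : toN x = m • z := by
        apply Subtype.ext
        show x.1 = m • y
        rw [← hxy]
        show ((m : ℕ) : ℝ) • y = m • y
        rw [Nat.cast_smul_eq_nsmul]
      show ((β.repr (toN x) i : ℤ) : ZMod m) = 0
      rw [hxz, map_nsmul, Finsupp.smul_apply]
      push_cast
      simp
    · intro hx
      have hdvd : ∀ i, (m : ℤ) ∣ β.repr (toN x) i := by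
        intro i
        rw [← ZMod.intCast_zmod_eq_zero_iff_dvd]
        exact congrFun hx i
      choose c hc using hdvd
      set z : ↥N := ∑ i, c i • β i with hz
      have hxz : toN x = m • z := by
        apply β.repr.injective
        ext i
        rw [map_nsmul, Finsupp.smul_apply, hz, Module.Basis.repr_sum_self]
        rw [hc i, nsmul_eq_mul]
      refine AddSubgroup.mem_map.mpr ⟨z.1, (Submodule.mem_toAddSubgroup _).mpr z.2, ?_⟩
      show ((m : ℕ) : ℝ) • z.1 = x.1
      rw [Nat.cast_smul_eq_nsmul]
      have := congrArg Subtype.val hxz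
      exact this.symm
  rw [AddSubgroup.relIndex, hker, AddSubgroup.index_ker,
    AddMonoidHom.range_eq_top.mpr hsurj]
  rw [Nat.card_congr AddSubgroup.topEquiv.toEquiv, Nat.card_pi]
  simp [Nat.card_zmod, sq]

end CoinAux

open CoinAux in
theorem coinIndex_eq_den_planar (Γ : AddSubgroup (Euc 2)) (hΓ : IsLattice Γ)
    (R : Euc 2 ≃ₗᵢ[ℝ] Euc 2) (hR : R ∈ OCset Γ)
    (δ : ℝ) (hδ : IsDen Γ R δ) :
    (coinIndex Γ R : ℝ) = δ := by
  classical
  obtain ⟨b, rfl⟩ := hΓ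
  set Γb := (Submodule.span ℤ (Set.range ⇑b)).toAddSubgroup with hΓb
  set L := rotMap R Γb with hL
  obtain ⟨hδ0, hδS, hmin⟩ := hδ
  obtain ⟨hfin1, hfin2⟩ := hR
  -- the two indices
  set S1 := L.relIndex Γb with hS1
  set S2 := Γb.relIndex L with hS2
  have hS10 : S1 ≠ 0 := by
    have h := hfin1.index_ne_zero
    rw [show ((Γb ⊓ L).addSubgroupOf Γb).index = (Γb ⊓ L).relIndex Γb from rfl] at h
    rwa [inf_comm, AddSubgroup.inf_relIndex_right] at h
  have hS20 : S2 ≠ 0 := by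
    have h := hfin2.index_ne_zero
    rw [show ((Γb ⊓ L).addSubgroupOf L).index = (Γb ⊓ L).relIndex L from rfl] at h
    rwa [AddSubgroup.inf_relIndex_right] at h
  -- pointwise consequences of δ being a scaling factor for R and R.symm
  have hδsymm : δ ∈ Scal Γb R.symm := scal_symm b R δ hδS
  have hδL : ∀ x ∈ L, δ • x ∈ Γb := by
    intro x hx
    obtain ⟨γ, hγ, rfl⟩ := mem_rotMap_iff.mp hx
    exact mem_scal_iff.mp hδS γ hγ
  have hδΓ : ∀ x ∈ Γb, δ • x ∈ L := by
    intro x hx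
    have h1 : δ • R.symm x ∈ Γb := mem_scal_iff.mp hδsymm x hx
    refine mem_rotMap_iff.mpr ⟨δ • R.symm x, h1, ?_⟩
    rw [map_smul, LinearIsometryEquiv.apply_symm_apply]
  -- S2 is a scaling factor for R
  have hS2S : ((S2 : ℕ) : ℝ) ∈ Scal Γb R := by
    rw [mem_scal_iff]
    intro γ hγ
    have hRγ : R γ ∈ L := mem_rotMap_iff.mpr ⟨γ, hγ, rfl⟩
    have := relindex_nsmul_mem Γb L (R γ) hRγ
    rwa [← Nat.cast_smul_eq_nsmul ℝ] at this
  -- S1 is a scaling factor for R.symm, hence for R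
  have hS1S : ((S1 : ℕ) : ℝ) ∈ Scal Γb R := by
    have h1 : ((S1 : ℕ) : ℝ) ∈ Scal Γb R.symm := by
      rw [mem_scal_iff]
      intro γ hγ
      have h2 : (S1 : ℕ) • γ ∈ L := relindex_nsmul_mem L Γb γ hγ
      obtain ⟨γ', hγ', hγ'e⟩ := mem_rotMap_iff.mp h2
      have : ((S1 : ℕ) : ℝ) • R.symm γ = γ' := by
        rw [← LinearIsometryEquiv.map_smul, Nat.cast_smul_eq_nsmul, ← hγ'e,
          LinearIsometryEquiv.symm_apply_apply]
      rwa [this]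
    have := scal_symm b R.symm _ h1
    rwa [LinearIsometryEquiv.symm_symm] at this
  -- δ² is a positive integer
  have hδ2 : ∃ n : ℤ, δ * δ = n := by
    have hb0 : b 0 ∈ Γb := Submodule.subset_span (Set.mem_range_self 0)
    have h1 : δ • b 0 ∈ L := hδΓ _ hb0
    have h2 : (δ * δ) • b 0 ∈ Γb := by
      rw [mul_smul]; exact hδL _ h1
    obtain ⟨n, hn⟩ := (mem_lat_iff b _).mp h2 0
    refine ⟨n, ?_⟩
    rw [_root_.map_smul, Finsupp.smul_apply, Module.Basis.repr_self] at hn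
    simpa using hn
  obtain ⟨n, hn⟩ := hδ2
  -- write S1 = k₁ δ, S2 = k₂ δ
  obtain ⟨k₁, hk₁⟩ := isden_int_mult ⟨hδ0, hδS, hmin⟩ hS1S
  obtain ⟨k₂, hk₂⟩ := isden_int_mult ⟨hδ0, hδS, hmin⟩ hS2S
  have hS1pos : 0 < S1 := Nat.pos_of_ne_zero hS10
  have hS2pos : 0 < S2 := Nat.pos_of_ne_zero hS20
  have hk₁pos : 0 < k₁ := by
    by_contra h
    push_neg at h
    have : (k₁ : ℝ) * δ ≤ 0 := mul_nonpos_of_nonpos_of_nonneg (by exact_mod_cast h) hδ0.le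
    rw [← hk₁] at this
    have : (0 : ℝ) < S1 := by exact_mod_cast hS1pos
    linarith
  have hk₂pos : 0 < k₂ := by
    by_contra h
    push_neg at h
    have : (k₂ : ℝ) * δ ≤ 0 := mul_nonpos_of_nonpos_of_nonneg (by exact_mod_cast h) hδ0.le
    rw [← hk₂] at this
    have : (0 : ℝ) < S2 := by exact_mod_cast hS2pos
    linarith
  -- δ is a positive integer
  have hδint : ∃ q : ℤ, 0 < q ∧ (q : ℝ) = δ := by
    have hsq : ((S2 : ℤ))^2 = k₂^2 * n := by
      have : ((S2 : ℝ))^2 = (k₂ : ℝ)^2 * (δ * δ) := by rw [hk₂]; ring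
      rw [hn] at this
      exact_mod_cast this
    have hdvd : k₂^2 ∣ ((S2 : ℤ))^2 := ⟨n, hsq⟩
    have hk₂dvd : k₂ ∣ (S2 : ℤ) := (Int.pow_dvd_pow_iff two_ne_zero).mp hdvd
    obtain ⟨q, hq⟩ := hk₂dvd
    have hqδ : (q : ℝ) = δ := by
      have h1 : ((S2 : ℕ) : ℝ) = (k₂ : ℝ) * (q : ℝ) := by
        have h2 := congrArg (fun z : ℤ => (z : ℝ)) hq
        push_cast at h2
        exact h2
      rw [hk₂] at h1
      have hk₂0 : (k₂ : ℝ) ≠ 0 := by exact_mod_cast hk₂pos.ne'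
      exact (mul_left_cancel₀ hk₂0 h1.symm)
    have hqpos : 0 < q := by
      by_contra h
      push_neg at h
      have : (q : ℝ) ≤ 0 := by exact_mod_cast h
      linarith
    exact ⟨q, hqpos, hqδ⟩
  obtain ⟨q, hqpos, hqδ⟩ := hδint
  set m : ℕ := q.toNat with hm
  have hmpos : 0 < m := by omega
  have hmδ : ((m : ℕ) : ℝ) = δ := by
    rw [← hqδ]
    norm_cast
    omega
  -- index chain
  have hne : ((m : ℕ) : ℝ) ≠ 0 := by positivity
  set μ : Euc 2 →+ Euc 2 := DistribMulAction.toAddMonoidHom (Euc 2) ((m : ℕ) : ℝ) with hμ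
  set P := Γb ⊔ L with hPdef
  set Λ := Γb ⊓ L with hΛdef
  have hμx : ∀ x : Euc 2, μ x = ((m : ℕ) : ℝ) • x := fun x => rfl
  have hsΓΓ : Γb.map μ ≤ Γb := by
    intro x hx
    obtain ⟨y, hy, rfl⟩ := AddSubgroup.mem_map.mp hx
    rw [hμx, Nat.cast_smul_eq_nsmul]
    exact nsmul_mem hy m
  have hΓP : Γb ≤ P := le_sup_left
  have hLP : L ≤ P := le_sup_right
  have hsPP : P.map μ ≤ P := by
    intro x hx
    obtain ⟨y, hy, rfl⟩ := AddSubgroup.mem_map.mp hx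
    rw [hμx, Nat.cast_smul_eq_nsmul]
    exact nsmul_mem hy m
  have hsΓsP : Γb.map μ ≤ P.map μ := AddSubgroup.map_mono hΓP
  have hsPΛ : P.map μ ≤ Λ := by
    intro x hx
    obtain ⟨y, hy, rfl⟩ := AddSubgroup.mem_map.mp hx
    obtain ⟨u, hu, v, hv, rfl⟩ := AddSubgroup.mem_sup.mp hy
    rw [hμx, hmδ, smul_add]
    rw [hΛdef, AddSubgroup.mem_inf]
    constructor
    · refine add_mem ?_ (hδL v hv)
      rw [← hmδ, Nat.cast_smul_eq_nsmul]
      exact nsmul_mem hu m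
    · refine add_mem (hδΓ u hu) ?_
      rw [← hmδ, Nat.cast_smul_eq_nsmul]
      exact nsmul_mem hv m
  have hΛΓ : Λ ≤ Γb := inf_le_left
  have hlat : (Γb.map μ).relIndex Γb = m ^ 2 := relindex_smul_lat b m hmpos
  have hE3 : (Γb.map μ).relIndex (P.map μ) = Γb.relIndex P := by
    have hμe : μ = (DistribMulAction.toAddEquiv₀ (Euc 2) ((m : ℕ) : ℝ) hne).toAddMonoidHom :=
      AddMonoidHom.ext fun x => rfl
    rw [hμe]
    exact relindex_map_equiv _ Γb P
  have hr2 : Γb.relIndex P = S2 := by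
    rw [hPdef]
    exact AddSubgroup.relIndex_sup_left L Γb
  have hE1 : (Γb.map μ).relIndex Γb * Γb.relIndex P = (Γb.map μ).relIndex P :=
    AddSubgroup.relIndex_mul_relIndex _ _ _ hsΓΓ hΓP
  have hE2 : (Γb.map μ).relIndex (P.map μ) * (P.map μ).relIndex P = (Γb.map μ).relIndex P :=
    AddSubgroup.relIndex_mul_relIndex _ _ _ hsΓsP hsPP
  have hsPidx : (P.map μ).relIndex P = m ^ 2 := by
    have h1 : S2 * ((P.map μ).relIndex P) = S2 * m ^ 2 := by
      calc S2 * ((P.map μ).relIndex P) = (Γb.map μ).relIndex P := by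
            rw [← hE2, hE3, hr2]
      _ = m ^ 2 * S2 := by rw [← hE1, hlat, hr2]
      _ = S2 * m ^ 2 := by ring
    exact Nat.eq_of_mul_eq_mul_left hS2pos h1
  have hr1 : Λ.relIndex Γb = S1 := by
    rw [hΛdef, inf_comm, AddSubgroup.inf_relIndex_right]
  have hE5 : Λ.relIndex Γb * Γb.relIndex P = Λ.relIndex P :=
    AddSubgroup.relIndex_mul_relIndex _ _ _ hΛΓ hΓP
  have hE4 : (P.map μ).relIndex Λ * Λ.relIndex P = (P.map μ).relIndex P :=
    AddSubgroup.relIndex_mul_relIndex _ _ _ hsPΛ (le_trans hΛΓ hΓP)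
  have hdvd : S1 * S2 ∣ m ^ 2 := by
    refine Dvd.intro_left ((P.map μ).relIndex Λ) ?_
    rw [← hsPidx, ← hE4, ← hE5, hr1, hr2]
  -- write S1 = a * m, S2 = c * m with a, c ≥ 1
  set a : ℕ := k₁.toNat with ha
  set c : ℕ := k₂.toNat with hc
  have hS1m : S1 = a * m := by
    have h1 : ((S1 : ℕ) : ℝ) = ((a * m : ℕ) : ℝ) := by
      rw [hk₁, ← hmδ]
      push_cast
      congr 1
      rw [ha]
      norm_cast
      omega
    exact_mod_cast h1
  have hS2m : S2 = c * m := by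
    have h1 : ((S2 : ℕ) : ℝ) = ((c * m : ℕ) : ℝ) := by
      rw [hk₂, ← hmδ]
      push_cast
      congr 1
      rw [hc]
      norm_cast
      omega
    exact_mod_cast h1
  have hapos : 0 < a := by
    rcases Nat.eq_zero_or_pos a with h | h
    · rw [h, zero_mul] at hS1m; exact absurd hS1m hS10
    · exact h
  have hcpos : 0 < c := by
    rcases Nat.eq_zero_or_pos c with h | h
    · rw [h, zero_mul] at hS2m; exact absurd hS2m hS20
    · exact h
  have hac : a * c = 1 := by
    have h1 : a * c * m ^ 2 ∣ m ^ 2 := by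
      have : S1 * S2 = a * c * m ^ 2 := by rw [hS1m, hS2m]; ring
      rwa [this] at hdvd
    have h2 : a * c * m ^ 2 ≤ m ^ 2 := Nat.le_of_dvd (by positivity) h1
    have h3 : a * c ≤ 1 := by
      by_contra h
      push_neg at h
      have : 2 * m ^ 2 ≤ a * c * m ^ 2 := by
        apply Nat.mul_le_mul_right
        omega
      have hm2 : 0 < m ^ 2 := by positivity
      omega
    have h4 : 1 ≤ a * c := Nat.one_le_iff_ne_zero.mpr (by positivity)
    omega
  have ha1 : a = 1 := by
    have h5 : a ≤ a * c := Nat.le_mul_of_pos_right a hcpos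
    omega
  have hS1meq : S1 = m := by rw [hS1m, ha1, one_mul]
  show ((L.relIndex Γb : ℕ) : ℝ) = δ
  rw [← hS1, hS1meq, hmδ]
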